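/- For every ε ∈ (0, 0.1), the intersection of conv{(0,0,0),(1,0,0),(1,1,0),(-1/2,3,1/2)} with the half-space -x₁ + x₃ ≤ 1 - ε equals the convex hull of the six points (0,0,0), (1,0,0), (1,1,0), (-1/2 + 3ε/4, 3 - 3ε/2, 1/2 - ε/4), (-1/2 + 3ε/4, 3 - ε, 1/2 - ε/4), and (-1/2 + ε/2, 3 - 3ε, 1/2 - ε/2). -/

import Mathlib

set_option maxHeartbeats 1000000

private lemma vec6_5 {α : Type*} (a b c d e f : α) : (![a,b,c,d,e,f]) 5 = f := rfl

theorem stmt6 (ε : ℝ) (hε0 : 0 < ε) (hε1 : ε < 0.1) :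
    convexHull ℝ ({![0,0,0], ![1,0,0], ![1,1,0], ![-(1/2), 3, 1/2]} : Set (Fin 3 → ℝ)) ∩
        {x : Fin 3 → ℝ | -(x 0) + x 2 ≤ 1 - ε} =
      convexHull ℝ
        ({![0,0,0], ![1,0,0], ![1,1,0],
          ![-(1/2) + 3*ε/4, 3 - 3*ε/2, 1/2 - ε/4],
          ![-(1/2) + 3*ε/4, 3 - ε, 1/2 - ε/4],
          ![-(1/2) + ε/2, 3 - 3*ε, 1/2 - ε/2]} : Set (Fin 3 → ℝ)) := by
  norm_num at hε1
  apply Set.Subset.antisymm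
  · -- ⊆
    rintro x ⟨hx, hcut⟩
    rw [← convexJoin_segments, mem_convexJoin] at hx
    obtain ⟨u, ⟨a1, a2, ha1, ha2, ha, hu⟩, v, ⟨c1, c2, hc1, hc2, hc, hv⟩,
      t1, t2, ht1, ht2, ht, hxe⟩ := hx
    simp only [Set.mem_setOf_eq] at hcut
    have hu0 : u 0 = a2 := by rw [← hu]; simp
    have hu1 : u 1 = 0 := by rw [← hu]; simp
    have hu2 : u 2 = 0 := by rw [← hu]; simp
    have hv0 : v 0 = c1 - c2/2 := by rw [← hv]; simp; ring
    have hv1 : v 1 = c1 + 3*c2 := by rw [← hv]; simp; ring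
    have hv2 : v 2 = c2/2 := by rw [← hv]; simp; ring
    obtain ⟨p, hp⟩ : ∃ p : ℝ, p = t1*a1 := ⟨_, rfl⟩
    obtain ⟨q, hq⟩ : ∃ q : ℝ, q = t1*a2 := ⟨_, rfl⟩
    obtain ⟨r, hr⟩ : ∃ r : ℝ, r = t2*c1 := ⟨_, rfl⟩
    obtain ⟨s, hs⟩ : ∃ s : ℝ, s = t2*c2 := ⟨_, rfl⟩
    have hx0 : x 0 = q + r - s/2 := by rw [hq, hr, hs, ← hxe]; simp [hu0, hv0]; ring
    have hx1 : x 1 = r + 3*s := by rw [hr, hs, ← hxe]; simp [hu1, hv1]; ring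
    have hx2 : x 2 = s/2 := by rw [hs, ← hxe]; simp [hu2, hv2]; ring
    have hp0 : 0 ≤ p := hp ▸ mul_nonneg ht1 ha1
    have hq0 : 0 ≤ q := hq ▸ mul_nonneg ht1 ha2
    have hr0 : 0 ≤ r := hr ▸ mul_nonneg ht2 hc1
    have hs0 : 0 ≤ s := hs ▸ mul_nonneg ht2 hc2
    have hsum1 : p + q + r + s = 1 := by
      rw [hp, hq, hr, hs]; nlinarith [ha, hc, ht]
    have hcut' : s - q - r ≤ 1 - ε := by rw [hx0, hx2] at hcut; linarith
    clear hu hv hxe hu0 hu1 hu2 hv0 hv1 hv2 hcut ha1 ha2 hc1 hc2 ht1 ht2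
    clear hp hq hr hs ha hc ht a1 a2 c1 c2 t1 t2 u v
    obtain ⟨M, hM⟩ : ∃ M : ℝ, M = (1-ε)*p + (2-ε)*(q+r) := ⟨_, rfl⟩
    have hMs : 0 ≤ M - ε*s := by
      have hpe : p = 1 - q - r - s := by linarith
      rw [hM, hpe]; nlinarith
    have hs1 : s ≤ 1 := by linarith
    have h1' : 1 - ε - s + ε*s ≤ M := by
      have hpe : p = 1 - q - r - s := by linarith
      rw [hM, hpe]; nlinarith
    have hMpos : 0 < M := by nlinarith [hMs, h1', hs1]
    have key := Finset.centerMass_mem_convexHull (Finset.univ : Finset (Fin 6))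
      (s := ({![0,0,0], ![1,0,0], ![1,1,0],
        ![-(1/2) + 3*ε/4, 3 - 3*ε/2, 1/2 - ε/4],
        ![-(1/2) + 3*ε/4, 3 - ε, 1/2 - ε/4],
        ![-(1/2) + ε/2, 3 - 3*ε, 1/2 - ε/2]} : Set (Fin 3 → ℝ)))
      (w := ![p*(M-ε*s), q*(M-ε*s), r*(M-ε*s), 2*q*s, 2*r*s, p*s])
      (z := ![![0,0,0], ![1,0,0], ![1,1,0],
        ![-(1/2) + 3*ε/4, 3 - 3*ε/2, 1/2 - ε/4],
        ![-(1/2) + 3*ε/4, 3 - ε, 1/2 - ε/4],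
        ![-(1/2) + ε/2, 3 - 3*ε, 1/2 - ε/2]])
      (fun i _ => by
        fin_cases i <;> simp [vec6_5] <;>
          nlinarith [mul_nonneg hp0 hMs, mul_nonneg hq0 hMs, mul_nonneg hr0 hMs,
            mul_nonneg hq0 hs0, mul_nonneg hr0 hs0, mul_nonneg hp0 hs0])
      (by
        rw [Fin.sum_univ_six]
        simp [vec6_5]
        nlinarith [hMpos, hsum1])
      (fun i _ => by fin_cases i <;> simp [vec6_5])
    have hsumW : ∑ i, (![p*(M-ε*s), q*(M-ε*s), r*(M-ε*s), 2*q*s, 2*r*s, p*s]) i = M := by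
      rw [Fin.sum_univ_six]; simp [vec6_5]; linear_combination M * hsum1 - s * hM
    have hxc : Finset.univ.centerMass
        ![p*(M-ε*s), q*(M-ε*s), r*(M-ε*s), 2*q*s, 2*r*s, p*s]
        ![![0,0,0], ![1,0,0], ![1,1,0],
          ![-(1/2) + 3*ε/4, 3 - 3*ε/2, 1/2 - ε/4],
          ![-(1/2) + 3*ε/4, 3 - ε, 1/2 - ε/4],
          ![-(1/2) + ε/2, 3 - 3*ε, 1/2 - ε/2]] = x := by
      rw [Finset.centerMass, hsumW, inv_smul_eq_iff₀ hMpos.ne']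
      rw [Fin.sum_univ_six]
      funext j
      fin_cases j <;>
        simp [vec6_5, hx0, hx1, hx2] <;>
        (rw [hM]; ring)
    rwa [hxc] at key
  · -- ⊇
    apply convexHull_min
    · rintro y (rfl | rfl | rfl | rfl | rfl | rfl)
      · exact ⟨subset_convexHull ℝ _ (by simp), by norm_num [Matrix.cons_val_two, Matrix.vecHead, Matrix.vecTail]; linarith⟩
      · exact ⟨subset_convexHull ℝ _ (by simp), by norm_num [Matrix.cons_val_two, Matrix.vecHead, Matrix.vecTail]; linarith⟩
      · exact ⟨subset_convexHull ℝ _ (by simp), by norm_num [Matrix.cons_val_two, Matrix.vecHead, Matrix.vecTail]; linarith⟩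
      · refine ⟨segment_subset_convexHull (s := {![0,0,0], ![1,0,0], ![1,1,0], ![-(1/2), 3, 1/2]})
          (x := ![1,0,0]) (y := ![-(1/2), 3, 1/2]) (by simp) (by simp)
          ⟨ε/2, 1-ε/2, by linarith, by linarith, by ring, ?_⟩, by norm_num [Matrix.cons_val_two, Matrix.vecHead, Matrix.vecTail]; linarith⟩
        funext j; fin_cases j <;> simp <;> ring
      · refine ⟨segment_subset_convexHull (s := {![0,0,0], ![1,0,0], ![1,1,0], ![-(1/2), 3, 1/2]})
          (x := ![1,1,0]) (y := ![-(1/2), 3, 1/2]) (by simp) (by simp)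
          ⟨ε/2, 1-ε/2, by linarith, by linarith, by ring, ?_⟩, by norm_num [Matrix.cons_val_two, Matrix.vecHead, Matrix.vecTail]; linarith⟩
        funext j; fin_cases j <;> simp <;> ring
      · refine ⟨segment_subset_convexHull (s := {![0,0,0], ![1,0,0], ![1,1,0], ![-(1/2), 3, 1/2]})
          (x := ![0,0,0]) (y := ![-(1/2), 3, 1/2]) (by simp) (by simp)
          ⟨ε, 1-ε, by linarith, by linarith, by ring, ?_⟩, by norm_num [Matrix.cons_val_two, Matrix.vecHead, Matrix.vecTail]; linarith⟩
        funext j; fin_cases j <;> simp <;> ring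
    · exact (convex_convexHull ℝ _).inter
        (convex_halfSpace_le ⟨fun x y => by simp; ring, fun c x => by simp; ring⟩ (1-ε))
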